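/- Let ρ₀, ρ₁ be rank-1 density matrices on a 2-dimensional space with |ρ₀⟩ = √(1-δ²)|ρ₁⟩ + δ|ρ₁⊥⟩, ρ₁⊥ = I - ρ₁, 0 ≤ ε < 1/2, z_b ≥ 0, and z = 16·((1-ε)/(1-ε/2))·z_b + 4/(1-ε). Then 4δ²·ρ₁⊥·(1/2)(1-(1-ε)z_b) ⪰ (1/4)(1 - (1-ε/2)z)(ρ₀ + ρ₁) as 2×2 Hermitian matrices. -/

import Mathlib

open scoped ComplexOrder
open scoped Matrix

lemma key_ineq (a c δ s P Q R : ℝ) (hnc : 0 ≤ -c) (hkey : 0 ≤ a + (-c) * δ^2 / 2)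
    (hδ0 : 0 ≤ δ) (hs0 : 0 ≤ s) (hsle : s ≤ 1)
    (hP : 0 ≤ P) (hQ : 0 ≤ Q) (hR : 0 ≤ R)
    (h2 : δ * Q ≤ R + s * P) : 0 ≤ a * Q^2 - c * (R^2 + P^2) := by
  have h3 : δ^2 * Q^2 ≤ (R + s*P)^2 := by nlinarith [mul_nonneg hδ0 hQ]
  have hs1 : s^2 ≤ 1 := by nlinarith
  have h4 : (R + s*P)^2 ≤ 2*R^2 + 2*P^2 := by
    nlinarith [sq_nonneg (R - s*P), mul_nonneg (sq_nonneg P) (by linarith : (0:ℝ) ≤ 1 - s^2)]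
  have h5 : δ^2*Q^2/2 ≤ R^2 + P^2 := by linarith
  nlinarith [mul_le_mul_of_nonneg_left h5 hnc, mul_nonneg hkey (sq_nonneg Q)]

/-- Inequality (7) of Claim 3.2: with the same setup,
`4δ²·ρ₁⊥·(1/2)(1-(1-ε)z_b) ⪰ (1/4)(1-(1-ε/2)z)(ρ₀+ρ₁)`. -/
theorem stmt_10 (δ ε z_b z : ℝ)
    (hδ0 : 0 ≤ δ) (hδ1 : δ ≤ 1) (hε0 : 0 ≤ ε) (hε1 : ε < 1/2) (hzb : 0 ≤ z_b)
    (hz : z = 16 * ((1 - ε) / (1 - ε/2)) * z_b + 4 / (1 - ε))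
    (v u : Fin 2 → ℂ)
    (hv : star v ⬝ᵥ v = 1) (hu : star u ⬝ᵥ u = 1) (hvu : star v ⬝ᵥ u = 0) :
    let ρ₁ : Matrix (Fin 2) (Fin 2) ℂ := Matrix.vecMulVec v (star v)
    let w : Fin 2 → ℂ := fun i => (Real.sqrt (1 - δ^2) : ℂ) * v i + (δ : ℂ) * u i
    let ρ₀ : Matrix (Fin 2) (Fin 2) ℂ := Matrix.vecMulVec w (star w)
    let ρ₁perp : Matrix (Fin 2) (Fin 2) ℂ := 1 - ρ₁
    (((4 * δ^2 * ((1/2) * (1 - (1 - ε) * z_b)) : ℝ) : ℂ) • ρ₁perp -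
      (((1/4 * (1 - (1 - ε/2) * z) : ℝ) : ℂ) • (ρ₀ + ρ₁))).PosSemidef := by
  intro ρ₁ w ρ₀ ρ₁perp
  have hε2 : (0:ℝ) < 1 - ε := by linarith
  have hε3 : (0:ℝ) < 1 - ε/2 := by linarith
  set s : ℝ := Real.sqrt (1 - δ^2) with hsdef
  have hs2 : s^2 = 1 - δ^2 := Real.sq_sqrt (by nlinarith)
  have hs0 : 0 ≤ s := Real.sqrt_nonneg _
  have hsle : s ≤ 1 := by nlinarith
  set a : ℝ := 4 * δ^2 * ((1/2) * (1 - (1 - ε) * z_b)) with ha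
  set c : ℝ := 1/4 * (1 - (1 - ε/2) * z) with hc
  set T : ℝ := 4 * (1 - ε/2) / (1 - ε) with hT
  have hne1 : (1:ℝ) - ε ≠ 0 := ne_of_gt hε2
  have hne2 : (2:ℝ) - ε ≠ 0 := by intro h; linarith [hε1]
  have h1 : (1 - ε/2) * z = 16*(1-ε)*z_b + T := by
    rw [hz, hT]; field_simp
  have hT4 : 4 ≤ T := by
    rw [hT, le_div_iff₀ hε2]; nlinarith
  have hnc : 0 ≤ -c := by
    have : -c = (16*(1-ε)*z_b + T - 1)/4 := by rw [hc]; linarith [h1]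
    rw [this]
    have : 0 ≤ 16*(1-ε)*z_b := by positivity
    linarith
  have hkey : 0 ≤ a + (-c) * δ^2 / 2 := by
    have he : a + (-c) * δ^2 / 2 = 2*δ^2 + δ^2*(T-1)/8 := by
      rw [ha, hc]; linear_combination (δ^2/8) * h1
    rw [he]
    have h9 : 0 ≤ δ^2*(T-1) := mul_nonneg (sq_nonneg δ) (by linarith)
    nlinarith [sq_nonneg δ]
  -- orthonormal pair spans: vv* + uu* = 1
  have hvherm : ∀ y : Fin 2 → ℂ, (Matrix.vecMulVec y (star y)).IsHermitian := by
    intro y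
    ext i j
    simp [Matrix.conjTranspose_apply, Matrix.vecMulVec_apply, mul_comm]
  set M : Matrix (Fin 2) (Fin 2) ℂ := Matrix.of ![![v 0, u 0], ![v 1, u 1]] with hM
  have hv' : (starRingEnd ℂ) (v 0) * v 0 + (starRingEnd ℂ) (v 1) * v 1 = 1 := by
    simpa [dotProduct, Fin.sum_univ_two] using hv
  have hu' : (starRingEnd ℂ) (u 0) * u 0 + (starRingEnd ℂ) (u 1) * u 1 = 1 := by
    simpa [dotProduct, Fin.sum_univ_two] using hu
  have hvu' : (starRingEnd ℂ) (v 0) * u 0 + (starRingEnd ℂ) (v 1) * u 1 = 0 := by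
    simpa [dotProduct, Fin.sum_univ_two] using hvu
  have hvu'' : (starRingEnd ℂ) (u 0) * v 0 + (starRingEnd ℂ) (u 1) * v 1 = 0 := by
    have := congrArg (starRingEnd ℂ) hvu'
    simp [map_add, map_mul] at this
    linear_combination this
  have hMM : Mᴴ * M = 1 := by
    ext i j
    fin_cases i <;> fin_cases j <;>
      simp [hM, Matrix.mul_apply, Fin.sum_univ_two, Matrix.conjTranspose_apply] <;>
      first
        | linear_combination hv'
        | linear_combination hu'
        | linear_combination hvu'
        | linear_combination hvu''
  have hMM2 : M * Mᴴ = 1 := mul_eq_one_comm.mp hMM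
  have hsum : ρ₁ + Matrix.vecMulVec u (star u) = 1 := by
    ext i j
    have h := congrFun (congrFun hMM2 i) j
    fin_cases i <;> fin_cases j <;>
      simp [hM, Matrix.mul_apply, Fin.sum_univ_two, Matrix.conjTranspose_apply,
        Matrix.vecMulVec_apply, ρ₁] at h ⊢ <;>
      linear_combination h
  have hperp : ρ₁perp = Matrix.vecMulVec u (star u) := by
    have : ρ₁perp = 1 - ρ₁ := rfl
    rw [this, ← hsum]; abel
  rw [Matrix.posSemidef_iff_dotProduct_mulVec]
  constructor
  · -- Hermitian
    have hsm : ∀ (r : ℝ) (X : Matrix (Fin 2) (Fin 2) ℂ), X.IsHermitian →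
        ((r:ℂ) • X).IsHermitian := by
      intro r X hX
      unfold Matrix.IsHermitian
      rw [Matrix.conjTranspose_smul, hX.eq]
      simp
    exact Matrix.IsHermitian.sub
      (hsm _ _ (by rw [hperp]; exact hvherm u))
      (hsm _ _ ((hvherm w).add (hvherm v)))
  · intro x
    set p : ℂ := star v ⬝ᵥ x with hp
    set q : ℂ := star u ⬝ᵥ x with hq
    set r : ℂ := (s:ℂ) * p + (δ:ℂ) * q with hr
    have hform : ∀ y : Fin 2 → ℂ,
        star x ⬝ᵥ (Matrix.vecMulVec y (star y) *ᵥ x)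
          = (star y ⬝ᵥ x) * (starRingEnd ℂ) (star y ⬝ᵥ x) := by
      intro y
      simp [dotProduct, Matrix.mulVec, Matrix.vecMulVec_apply, Fin.sum_univ_two,
        map_add, map_mul]
      ring
    have hwx : star w ⬝ᵥ x = r := by
      rw [hr, hp, hq]
      simp [w, dotProduct, Fin.sum_univ_two, map_add, map_mul, Complex.conj_ofReal]
      ring
    have hval : star x ⬝ᵥ
        ((((a : ℝ) : ℂ) • ρ₁perp - (((c : ℝ) : ℂ) • (ρ₀ + ρ₁))) *ᵥ x)
        = (a:ℂ) * (q * (starRingEnd ℂ) q) - (c:ℂ) * (r * (starRingEnd ℂ) r + p * (starRingEnd ℂ) p) := by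
      rw [hperp]
      rw [Matrix.sub_mulVec, Matrix.smul_mulVec, Matrix.smul_mulVec,
        Matrix.add_mulVec, dotProduct_sub, dotProduct_smul,
        dotProduct_smul, dotProduct_add]
      rw [hform u, hform v, hform w, hwx, ← hp, ← hq]
      simp [smul_eq_mul]
    rw [hval]
    have hcast : (a:ℂ) * (q * (starRingEnd ℂ) q) - (c:ℂ) * (r * (starRingEnd ℂ) r + p * (starRingEnd ℂ) p)
        = ((a * Complex.normSq q - c * (Complex.normSq r + Complex.normSq p) : ℝ) : ℂ) := by
      rw [Complex.mul_conj, Complex.mul_conj, Complex.mul_conj]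
      push_cast
      ring
    rw [hcast]
    rw [Complex.zero_le_real]
    have h2 : δ * ‖q‖ ≤ ‖r‖ + s * ‖p‖ := by
      have hd : (δ:ℂ) * q = r - (s:ℂ) * p := by rw [hr]; ring
      have := norm_sub_le r ((s:ℂ) * p)
      rw [← hd] at this
      simpa [norm_mul, Complex.norm_real, abs_of_nonneg hδ0,
        abs_of_nonneg hs0] using this
    have hnq : Complex.normSq q = ‖q‖ ^ 2 := (Complex.sq_norm q).symm
    have hnr : Complex.normSq r = ‖r‖ ^ 2 := (Complex.sq_norm r).symm
    have hnp : Complex.normSq p = ‖p‖ ^ 2 := (Complex.sq_norm p).symm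
    rw [hnq, hnr, hnp]
    set P := ‖p‖
    set Q := ‖q‖
    set R := ‖r‖
    have hP : 0 ≤ P := norm_nonneg p
    have hQ : 0 ≤ Q := norm_nonneg q
    have hR : 0 ≤ R := norm_nonneg r
    clear_value P Q R
    exact key_ineq a c δ s P Q R hnc hkey hδ0 hs0 hsle hP hQ hR h2
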